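/- arXiv:0711.4185 — 4 statements merged into one kernel-verified Lean document; each statement's English description precedes it below -/
import Mathlib

section
/- For a word w = w_1 w_2 ⋯ w_s that is weakly increasing, the successive row insertion of w into a semistandard tableau Y adds a horizontal strip to the shape of Y (no two added boxes lie in the same column). -/
/-- Schensted row insertion into a single row: returns the new row and the bumped entry. -/
def insertRow : List ℕ → ℕ → List ℕ × Option ℕ
  | [], x => ([x], none)
  | y :: ys, x =>
    if x < y then (x :: ys, some y)
    else
      let p := insertRow ys x
      (y :: p.1, p.2)

/-- Schensted row insertion of a letter into a tableau (list of rows). -/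
def rsInsert : List (List ℕ) → ℕ → List (List ℕ)
  | [], x => [[x]]
  | r :: rs, x =>
    match (insertRow r x).2 with
    | none => (insertRow r x).1 :: rs
    | some y => (insertRow r x).1 :: rsInsert rs y

/-- Successive insertion of a word. -/
def rsInsertWord (Y : List (List ℕ)) (w : List ℕ) : List (List ℕ) :=
  w.foldl rsInsert Y

/-- The row word of a tableau: rows read from bottom to top. -/
def rowWord (Y : List (List ℕ)) : List ℕ := Y.reverse.flatten

/-- Length of the `i`-th row (the shape of the tableau). -/
def shapeAt (Y : List (List ℕ)) (i : ℕ) : ℕ := (Y.getD i []).length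

/-- The highest element of `B^{r,s}`: row `i` filled with `i`. -/
def highestTab (r s : ℕ) : List (List ℕ) :=
  (List.range r).map fun i => List.replicate s (i + 1)

/-- Energy function: number of boxes of `(b' ← row(b))` outside the
concatenation of the shapes of `b` and `b'`. -/
def energyH (b b' : List (List ℕ)) : ℕ :=
  let Z := rsInsertWord b' (rowWord b)
  ∑ i ∈ Finset.range Z.length, (shapeAt Z i - (shapeAt b i + shapeAt b' i))

/-- Semistandard Young tableau: rows weakly increasing, nonempty,
shape weakly decreasing, and columns strictly increasing. -/
def IsSSYT (Y : List (List ℕ)) : Prop :=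
  (∀ r ∈ Y, List.Chain' (· ≤ ·) r) ∧
  (∀ r ∈ Y, r ≠ []) ∧
  List.Chain' (fun r s => s.length ≤ r.length ∧
    ∀ i < s.length, r.getD i 0 < s.getD i 0) Y


-- basic getD helpers
lemma getD_mem' (l : List ℕ) (i : ℕ) (h : i < l.length) : l.getD i 0 ∈ l := by
  rw [List.getD_eq_getElem _ _ h]; exact List.getElem_mem h

lemma getD_set_ne' (l : List ℕ) (q i x : ℕ) (h : i ≠ q) :
    (l.set q x).getD i 0 = l.getD i 0 := by
  by_cases hi : i < l.length
  · rw [List.getD_eq_getElem _ _ (by simpa using hi), List.getD_eq_getElem _ _ hi]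
    exact List.getElem_set_ne (by omega) _
  · rw [List.getD_eq_default _ _ (by simpa using (not_lt.mp hi)),
      List.getD_eq_default _ _ (not_lt.mp hi)]

lemma getD_set_self' (l : List ℕ) (q x : ℕ) (h : q < l.length) :
    (l.set q x).getD q 0 = x := by
  rw [List.getD_eq_getElem _ _ (by simpa using h)]
  exact List.getElem_set_self _

lemma insertRow_append (R : List ℕ) (x : ℕ) (h : ∀ y ∈ R, y ≤ x) :
    insertRow R x = (R ++ [x], none) := by
  induction R with
  | nil => simp [insertRow]
  | cons y ys ih =>
    have hy : y ≤ x := h y (by simp)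
    simp [insertRow, not_lt.mpr hy, ih (fun z hz => h z (by simp [hz]))]

lemma insertRow_bump (R : List ℕ) (x : ℕ) (h : ¬ ∀ y ∈ R, y ≤ x) :
    ∃ q, q < R.length ∧ (∀ i < q, R.getD i 0 ≤ x) ∧ x < R.getD q 0 ∧
      insertRow R x = (R.set q x, some (R.getD q 0)) := by
  induction R with
  | nil => simp at h
  | cons y ys ih =>
    by_cases hxy : x < y
    · exact ⟨0, by simp, by omega, by simpa using hxy, by simp [insertRow, hxy]⟩
    · have h' : ¬ ∀ z ∈ ys, z ≤ x := by
        intro hall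
        refine h ?_
        intro z hz
        rcases List.mem_cons.mp hz with rfl | hz
        · omega
        · exact hall z hz
      obtain ⟨q, hq, hmin, hqx, heq⟩ := ih h'
      refine ⟨q + 1, by simpa using hq, ?_, by simpa using hqx, ?_⟩
      · intro i hi
        match i with
        | 0 => simpa using (not_lt.mp hxy)
        | j + 1 => simpa using hmin j (by omega)
      · simp [insertRow, hxy, heq]

lemma insertRow_fst_length (R : List ℕ) (x : ℕ) : R.length ≤ (insertRow R x).1.length := by
  induction R with
  | nil => simp [insertRow]
  | cons y ys ih =>
    by_cases hxy : x < y
    · simp [insertRow, hxy]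
    · simpa [insertRow, hxy] using ih

def insertRowWord : List ℕ → List ℕ → List ℕ × List ℕ
  | R, [] => (R, [])
  | R, x :: v =>
    ((insertRowWord (insertRow R x).1 v).1,
     (insertRow R x).2.toList ++ (insertRowWord (insertRow R x).1 v).2)

@[simp] lemma insertRowWord_nil (R : List ℕ) : insertRowWord R [] = (R, []) := rfl

lemma insertRowWord_cons (R : List ℕ) (x : ℕ) (v : List ℕ) :
    insertRowWord R (x :: v) =
      ((insertRowWord (insertRow R x).1 v).1,
       (insertRow R x).2.toList ++ (insertRowWord (insertRow R x).1 v).2) := rfl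

@[simp] lemma rsInsertWord_nil (Z : List (List ℕ)) : rsInsertWord Z [] = Z := rfl

lemma rsInsertWord_cons (Z : List (List ℕ)) (x : ℕ) (v : List ℕ) :
    rsInsertWord Z (x :: v) = rsInsertWord (rsInsert Z x) v := rfl

lemma rsInsert_cons_none {r : List ℕ} {rs : List (List ℕ)} {x : ℕ}
    (h : (insertRow r x).2 = none) : rsInsert (r :: rs) x = (insertRow r x).1 :: rs := by
  simp only [rsInsert]; rw [h]

lemma rsInsert_cons_some {r : List ℕ} {rs : List (List ℕ)} {x y : ℕ}
    (h : (insertRow r x).2 = some y) :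
    rsInsert (r :: rs) x = (insertRow r x).1 :: rsInsert rs y := by
  simp only [rsInsert]; rw [h]

lemma rsInsertWord_decomp (v : List ℕ) : ∀ (R : List ℕ) (rest : List (List ℕ)),
    rsInsertWord (R :: rest) v =
      (insertRowWord R v).1 :: rsInsertWord rest (insertRowWord R v).2 := by
  induction v with
  | nil => intro R rest; simp
  | cons x v ih =>
    intro R rest
    rw [rsInsertWord_cons]
    cases h : (insertRow R x).2 with
    | none =>
      rw [rsInsert_cons_none h, ih]
      simp [insertRowWord_cons, h]
    | some y =>
      rw [rsInsert_cons_some h, ih]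
      rw [insertRowWord_cons, h]
      rfl

lemma row_aux (S : List ℕ) (n : ℕ) (hSn : S.length ≤ n) (v : List ℕ) :
    ∀ (p T : List ℕ) (c x : ℕ),
    v.length = p.length →
    List.Pairwise (· ≤ ·) v →
    (∀ a ∈ v, x ≤ a) →
    List.Pairwise (· < ·) p →
    (∀ a ∈ p, a < n) →
    (∀ a ∈ p, c ≤ a) →
    S.length ≤ T.length →
    T.length ≤ n →
    T.length ≤ max S.length c →
    c ≤ T.length →
    (∀ i < c, T.getD i 0 ≤ x) →
    (∀ i, c ≤ i → i < S.length → T.getD i 0 = S.getD i 0) →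
    (∀ j < v.length, p.getD j 0 < S.length → v.getD j 0 < S.getD (p.getD j 0) 0) →
    (insertRowWord T v).1.length ≤ n ∧
    ∃ q : List ℕ, List.Pairwise (· < ·) q ∧ (∀ a ∈ q, c ≤ a ∧ a < S.length) ∧
      (insertRowWord T v).2 = q.map (fun a => S.getD a 0) := by
  induction v with
  | nil =>
    intro p T c x _ _ _ _ _ _ _ hTn _ _ _ _ _
    exact ⟨by simpa using hTn, [], by simp, by simp, by simp⟩
  | cons y v' ih =>
    intro p T c x hvp hv hxv hp hpn hcp hST hTn hTmax hcT hTc hTS hcompat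
    cases p with
    | nil => simp at hvp
    | cons π p' =>
      have hxy : x ≤ y := hxv y (by simp)
      have hπn : π < n := hpn π (by simp)
      have hcπ : c ≤ π := hcp π (by simp)
      have hcompat0 : π < S.length → y < S.getD π 0 := by
        intro hπ
        have := hcompat 0 (by simp) (by simpa using hπ)
        simpa using this
      have hv' : List.Pairwise (· ≤ ·) v' := (List.pairwise_cons.mp hv).2
      have hyv' : ∀ a ∈ v', y ≤ a := (List.pairwise_cons.mp hv).1
      have hp' : List.Pairwise (· < ·) p' := (List.pairwise_cons.mp hp).2
      have hπp' : ∀ a ∈ p', π < a := (List.pairwise_cons.mp hp).1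
      have hvp' : v'.length = p'.length := by simpa using hvp
      have hpn' : ∀ a ∈ p', a < n := fun a ha => hpn a (by simp [ha])
      have hcompat' : ∀ j < v'.length,
          p'.getD j 0 < S.length → v'.getD j 0 < S.getD (p'.getD j 0) 0 := by
        intro j hj hjS
        have := hcompat (j+1) (by simpa using hj)
        simp only [List.getD_cons_succ] at this
        exact this hjS
      by_cases h : ∀ z ∈ T, z ≤ y
      · -- append case
        have hins : insertRow T y = (T ++ [y], none) := insertRow_append T y h
        have hπS : S.length ≤ π := by
          by_contra hlt
          push_neg at hlt
          have h1 : T.getD π 0 = S.getD π 0 := hTS π hcπ hlt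
          have h2 : y < S.getD π 0 := hcompat0 hlt
          have h3 := h _ (getD_mem' T π (lt_of_lt_of_le hlt hST))
          omega
        have hTπ : T.length ≤ π := le_trans hTmax (by omega)
        have key := ih p' (T ++ [y]) (T.length + 1) y hvp' hv' hyv' hp' hpn'
          (fun a ha => by have := hπp' a ha; omega)
          (by simp; omega) (by simp; omega)
          (by simp) (by simp)
          (by
            intro i hi
            rcases lt_or_ge i T.length with h1 | h1
            · rw [List.getD_append _ _ _ _ h1]
              exact h _ (getD_mem' T i h1)
            · have : i = T.length := by omega
              subst this
              rw [List.getD_eq_getElem _ _ (by simp)]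
              simp)
          (by intro i h1 h2; omega)
          hcompat'
        rw [insertRowWord_cons, hins]
        refine ⟨key.1, ?_⟩
        obtain ⟨q, hq1, hq2, hq3⟩ := key.2
        exact ⟨q, hq1, fun a ha => ⟨le_trans (by omega : c ≤ T.length + 1) (hq2 a ha).1,
          (hq2 a ha).2⟩, by simpa using hq3⟩
      · -- bump case
        obtain ⟨q, hqT, hmin, hqy, hins⟩ := insertRow_bump T y h
        have hcq : c ≤ q := by
          by_contra hlt
          push_neg at hlt
          have := hTc q hlt
          omega
        have hqS : q < S.length := by
          by_contra hge
          push_neg at hge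
          rcases Nat.le_total c S.length with h1 | h1
          · have : max S.length c = S.length := max_eq_left h1
            omega
          · have : max S.length c = c := max_eq_right h1
            omega
        have hTq : T.getD q 0 = S.getD q 0 := hTS q hcq hqS
        have hqπ : q ≤ π := by
          by_contra hgt
          push_neg at hgt
          have h1 : T.getD π 0 ≤ y := hmin π hgt
          have h2 : y < S.getD π 0 := hcompat0 (lt_trans hgt hqS)
          have h3 : T.getD π 0 = S.getD π 0 := hTS π hcπ (lt_trans hgt hqS)
          omega
        have key := ih p' (T.set q y) (q + 1) y hvp' hv' hyv' hp' hpn'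
          (fun a ha => by have := hπp' a ha; omega)
          (by simpa using hST) (by simpa using hTn)
          (by
            rw [List.length_set]
            exact le_trans hTmax (max_le_max le_rfl (by omega)))
          (by rw [List.length_set]; omega)
          (by
            intro i hi
            rcases lt_or_ge i q with h1 | h1
            · rw [getD_set_ne' _ _ _ _ (by omega)]
              exact hmin i h1
            · have : i = q := by omega
              subst this
              rw [getD_set_self' _ _ _ hqT])
          (by
            intro i h1 h2
            rw [getD_set_ne' _ _ _ _ (by omega)]
            exact hTS i (by omega) h2)
          hcompat'
        rw [insertRowWord_cons, hins]
        refine ⟨key.1, ?_⟩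
        obtain ⟨q', hq'1, hq'2, hq'3⟩ := key.2
        refine ⟨q :: q', ?_, ?_, ?_⟩
        · rw [List.pairwise_cons]
          exact ⟨fun a ha => by have := (hq'2 a ha).1; omega, hq'1⟩
        · intro a ha
          rcases List.mem_cons.mp ha with rfl | ha
          · exact ⟨hcq, hqS⟩
          · exact ⟨by have := (hq'2 a ha).1; omega, (hq'2 a ha).2⟩
        · simp only [Option.toList_some, List.singleton_append, List.map_cons, hTq, hq'3]

lemma shapeAt_le_rsInsert (Y : List (List ℕ)) (x i : ℕ) :
    shapeAt Y i ≤ shapeAt (rsInsert Y x) i := by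
  induction Y generalizing x i with
  | nil => simp [shapeAt]
  | cons r rs ih =>
    cases h : (insertRow r x).2 with
    | none =>
      rw [rsInsert_cons_none h]
      cases i with
      | zero => simpa [shapeAt] using insertRow_fst_length r x
      | succ j => simp [shapeAt]
    | some y =>
      rw [rsInsert_cons_some h]
      cases i with
      | zero => simpa [shapeAt] using insertRow_fst_length r x
      | succ j => simpa [shapeAt] using ih y j

lemma shapeAt_le_rsInsertWord (w : List ℕ) (Y : List (List ℕ)) (i : ℕ) :
    shapeAt Y i ≤ shapeAt (rsInsertWord Y w) i := by
  induction w generalizing Y with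
  | nil => simp
  | cons x w ih =>
    rw [rsInsertWord_cons]
    exact le_trans (shapeAt_le_rsInsert Y x i) (ih (rsInsert Y x))

lemma length_le_of_pairwise_lt (p : List ℕ) (n : ℕ) (hp : List.Pairwise (· < ·) p)
    (h : ∀ a ∈ p, a < n) : p.length ≤ n := by
  have hnd : p.Nodup := hp.imp (fun h => Nat.ne_of_lt h)
  have := (List.subperm_of_subset hnd (fun a ha => List.mem_range.mpr (h a ha))).length_le
  simpa using this

lemma sorted_getD (S : List ℕ) (hS : List.Chain' (· ≤ ·) S) {a b : ℕ} (hab : a < b)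
    (hb : b < S.length) : S.getD a 0 ≤ S.getD b 0 := by
  rw [List.getD_eq_getElem _ _ (lt_trans hab hb), List.getD_eq_getElem _ _ hb]
  exact List.pairwise_iff_getElem.mp (List.isChain_iff_pairwise.mp hS) a b _ hb hab

lemma insertRowWord_all (v : List ℕ) : ∀ R : List ℕ, List.Pairwise (· ≤ ·) v →
    (∀ a ∈ R, ∀ b ∈ v, a ≤ b) → insertRowWord R v = (R ++ v, []) := by
  induction v with
  | nil => intro R _ _; simp
  | cons b v' ih =>
    intro R hv hRv
    have hins : insertRow R b = (R ++ [b], none) :=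
      insertRow_append R b (fun a ha => hRv a ha b (by simp))
    rw [insertRowWord_cons, hins]
    have := ih (R ++ [b]) (List.pairwise_cons.mp hv).2 (by
      intro a ha b' hb'
      rcases List.mem_append.mp ha with ha | ha
      · exact hRv a ha b' (by simp [hb'])
      · simp at ha
        subst ha
        exact (List.pairwise_cons.mp hv).1 b' hb')
    rw [this]
    simp

lemma rsInsertWord_nil_char (v : List ℕ) (hv : List.Pairwise (· ≤ ·) v) :
    rsInsertWord [] v = [] ∨ rsInsertWord [] v = [v] := by
  cases v with
  | nil => left; rfl
  | cons a v' =>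
    right
    have h1 : rsInsertWord [] (a :: v') = rsInsertWord [[a]] v' := rfl
    rw [h1, rsInsertWord_decomp,
      insertRowWord_all v' [a] (List.pairwise_cons.mp hv).2
        (by intro x hx b hb; simp at hx; subst hx; exact (List.pairwise_cons.mp hv).1 b hb)]
    simp

lemma insert_aux (Y : List (List ℕ)) : ∀ (v p : List ℕ) (n : ℕ),
    (∀ r ∈ Y, List.Chain' (· ≤ ·) r) →
    List.Chain' (fun r s => s.length ≤ r.length ∧ ∀ i < s.length, r.getD i 0 < s.getD i 0) Y →
    v.length = p.length →
    List.Pairwise (· ≤ ·) v →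
    List.Pairwise (· < ·) p →
    (∀ a ∈ p, a < n) →
    (Y.getD 0 []).length ≤ n →
    (∀ j < v.length, p.getD j 0 < (Y.getD 0 []).length →
      v.getD j 0 < (Y.getD 0 []).getD (p.getD j 0) 0) →
    shapeAt (rsInsertWord Y v) 0 ≤ n ∧ ∀ i, shapeAt (rsInsertWord Y v) (i+1) ≤ shapeAt Y i := by
  induction Y with
  | nil =>
    intro v p n _ _ hvp hv hp hpn _ _
    rcases rsInsertWord_nil_char v hv with h | h
    · rw [h]; exact ⟨by simp [shapeAt], fun i => by simp [shapeAt]⟩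
    · rw [h]
      constructor
      · have := length_le_of_pairwise_lt p n hp hpn
        simpa [shapeAt] using by omega
      · intro i; simp [shapeAt]
  | cons S rest ih =>
    intro v p n hrows hch hvp hv hp hpn hSn hcompat
    simp only [List.getD_cons_zero] at hSn hcompat
    have key := row_aux S n hSn v p S 0 0 hvp hv (by simp) hp hpn (by simp) le_rfl hSn
      (by simp) (by simp) (by omega) (fun i _ _ => rfl) hcompat
    obtain ⟨hlen, q, hq1, hq2, hq3⟩ := key
    have houtlen : (insertRowWord S v).2.length = q.length := by rw [hq3]; simp
    have houtget : ∀ j < q.length,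
        (insertRowWord S v).2.getD j 0 = S.getD (q.getD j 0) 0 := by
      intro j hj
      rw [hq3, List.getD_eq_getElem _ _ (by simpa using hj), List.getElem_map,
        ← List.getD_eq_getElem _ _ hj]
    have hSsort : List.Chain' (· ≤ ·) S := hrows S (by simp)
    have hout_sorted : List.Pairwise (· ≤ ·) (insertRowWord S v).2 := by
      rw [hq3, List.pairwise_map]
      refine hq1.imp_of_mem ?_
      intro a b ha hb hab
      exact sorted_getD S hSsort hab (hq2 b hb).2
    have hrest_len : (rest.getD 0 []).length ≤ S.length := by
      cases rest with
      | nil => simp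
      | cons S2 rest' => simpa using (List.isChain_cons_cons.mp hch).1.1
    have hrest_compat : ∀ j < (insertRowWord S v).2.length,
        q.getD j 0 < (rest.getD 0 []).length →
        (insertRowWord S v).2.getD j 0 < (rest.getD 0 []).getD (q.getD j 0) 0 := by
      intro j hj hjlt
      rw [houtget j (by omega)]
      cases rest with
      | nil => simp at hjlt
      | cons S2 rest' =>
        simp only [List.getD_cons_zero] at hjlt ⊢
        exact (List.isChain_cons_cons.mp hch).1.2 _ hjlt
    have ihres := ih (insertRowWord S v).2 q S.length
      (fun r hr => hrows r (by simp [hr]))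
      (List.IsChain.tail hch)
      houtlen hout_sorted hq1 (fun a ha => (hq2 a ha).2) hrest_len hrest_compat
    rw [rsInsertWord_decomp]
    constructor
    · simpa [shapeAt] using hlen
    · intro i
      cases i with
      | zero =>
        have := ihres.1
        simpa [shapeAt] using this
      | succ j =>
        have := ihres.2 j
        simpa [shapeAt] using this

/-- Inserting a weakly increasing word into a semistandard tableau adds a
horizontal strip: the new shape contains the old one, with at most one new
box in each column. -/
theorem schensted_insert_word_horizontal_strip (Y : List (List ℕ)) (w : List ℕ)
    (hY : IsSSYT Y) (hYpos : ∀ r ∈ Y, ∀ a ∈ r, 0 < a)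
    (hw : List.Chain' (· ≤ ·) w) (hwpos : ∀ a ∈ w, 0 < a) :
    (∀ i, shapeAt Y i ≤ shapeAt (rsInsertWord Y w) i) ∧
    (∀ i, shapeAt (rsInsertWord Y w) (i + 1) ≤ shapeAt Y i) := by
  refine ⟨fun i => shapeAt_le_rsInsertWord w Y i, ?_⟩
  set S0 := Y.getD 0 [] with hS0
  set p : List ℕ := (List.range w.length).map (· + S0.length) with hpdef
  have hplen : w.length = p.length := by simp [hpdef]
  have hppw : List.Pairwise (· < ·) p :=
    (List.pairwise_lt_range (n := w.length)).map (· + S0.length) (fun {a b} hab => by omega)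
  have hpn : ∀ a ∈ p, a < S0.length + w.length := by
    intro a ha
    simp only [hpdef, List.mem_map, List.mem_range] at ha
    obtain ⟨i, hi, rfl⟩ := ha
    omega
  have hpget : ∀ j < w.length, p.getD j 0 = j + S0.length := by
    intro j hj
    rw [hpdef, List.getD_eq_getElem _ _ (by simpa using hj), List.getElem_map,
      List.getElem_range]
  have hcompat : ∀ j < w.length, p.getD j 0 < S0.length →
      w.getD j 0 < S0.getD (p.getD j 0) 0 := by
    intro j hj hlt
    rw [hpget j hj] at hlt
    omega
  exact (insert_aux Y w p (S0.length + w.length) hY.1 hY.2.2 hplen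
    (List.isChain_iff_pairwise.mp hw) hppw hpn (by rw [← hS0]; omega) hcompat).2
end

section
/- Let u be the r × s rectangular semistandard tableau whose i-th row is filled entirely with the entry i (the highest element of B^{r,s}), and let v be any semistandard tableau of rectangular shape r' × s' with entries in {1, …, n+1}. Then the row word insertion (u ← row(v)) has shape equal to the concatenation of the partitions (s^r) and (s'^{r'}), i.e. the partition whose i-th part is s + s' for i ≤ min(r,r') and appropriate parts from the larger of the two rectangles otherwise. Consequently the energy H(v ⊗ u) = 0. -/
/-! ### Auxiliary lemmas -/

lemma insertRow_skip (x : ℕ) : ∀ (p l : List ℕ), (∀ b ∈ p, ¬ x < b) →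
    insertRow (p ++ l) x = (p ++ (insertRow l x).1, (insertRow l x).2)
  | [], l, _ => by simp
  | b :: p, l, h => by
    have hb : ¬ x < b := h b (by simp)
    have := insertRow_skip x p l (fun c hc => h c (by simp [hc]))
    simp [insertRow, hb, this]

lemma insertRow_replicate (x c s : ℕ) (t : List ℕ) (h : c ≤ x) :
    insertRow (List.replicate s c ++ t) x
      = (List.replicate s c ++ (insertRow t x).1, (insertRow t x).2) :=
  insertRow_skip x _ t (by intro b hb; rw [List.eq_of_mem_replicate hb]; omega)

lemma insertRow_bump_lt : ∀ (l : List ℕ) (x y : ℕ), (insertRow l x).2 = some y → x < y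
  | [], x, y => by simp [insertRow]
  | b :: l, x, y => by
    by_cases hb : x < b
    · simp [insertRow, hb]; rintro rfl; exact hb
    · simp only [insertRow, if_neg hb]
      exact insertRow_bump_lt l x y

/-- graft: prepend constant prefixes `replicate s c, replicate s (c+1), …` (r rows)
to the rows of `T`. -/
def graftAux (s : ℕ) : ℕ → ℕ → List (List ℕ) → List (List ℕ)
  | _, 0, T => T
  | c, r+1, T => (List.replicate s c ++ T.headD []) :: graftAux s (c+1) r T.tail

lemma rsInsert_cons (row : List ℕ) (rs : List (List ℕ)) (x : ℕ) :
    rsInsert (row :: rs) x = match (insertRow row x).2 with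
      | none => (insertRow row x).1 :: rs
      | some y => (insertRow row x).1 :: rsInsert rs y := rfl

lemma rsInsert_graft (s : ℕ) : ∀ (r c : ℕ) (T : List (List ℕ)) (x : ℕ), c ≤ x →
    rsInsert (graftAux s c r T) x = graftAux s c r (rsInsert T x)
  | 0, c, T, x, _ => rfl
  | r+1, c, T, x, hcx => by
    rw [graftAux]
    cases T with
    | nil =>
      rw [rsInsert_cons]
      simp only [List.headD_nil, List.tail_nil]
      rw [insertRow_replicate x c s [] hcx]
      simp [rsInsert, insertRow, graftAux]
    | cons h t =>
      rw [rsInsert_cons]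
      simp only [List.headD_cons, List.tail_cons]
      rw [insertRow_replicate x c s h hcx]
      cases hb : (insertRow h x).2 with
      | none => simp [rsInsert_cons, hb, graftAux]
      | some y =>
        have hy : c + 1 ≤ y := by
          have := insertRow_bump_lt h x y hb
          omega
        simp only [hb]
        rw [rsInsert_graft s r (c+1) t y hy]
        simp [rsInsert_cons, hb, graftAux]

lemma rsInsertWord_graft (s r : ℕ) : ∀ (w : List ℕ) (c : ℕ) (T : List (List ℕ)),
    (∀ x ∈ w, c ≤ x) →
    rsInsertWord (graftAux s c r T) w = graftAux s c r (rsInsertWord T w)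
  | [], c, T, _ => rfl
  | x :: w, c, T, h => by
    have hx : c ≤ x := h x (by simp)
    show rsInsertWord (rsInsert (graftAux s c r T) x) w = _
    rw [rsInsert_graft s r c T x hx]
    exact rsInsertWord_graft s r w c (rsInsert T x) (fun y hy => h y (by simp [hy]))

lemma highestTab_eq (s : ℕ) : ∀ (r c : ℕ),
    ((List.range r).map fun i => List.replicate s (i + c)) = graftAux s c r []
  | 0, c => rfl
  | r+1, c => by
    rw [List.range_succ_eq_map, graftAux]
    simp only [List.map_cons, List.map_map, List.headD_nil, List.tail_nil, List.append_nil,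
      Function.comp]
    rw [← highestTab_eq s r (c+1)]
    congr 1
    · simp
    · apply List.map_congr_left
      intro a _
      show List.replicate s (a + 1 + c) = List.replicate s (a + (c + 1))
      congr 1
      omega

lemma highestTab_graft (r s : ℕ) : highestTab r s = graftAux s 1 r [] := by
  rw [highestTab, ← highestTab_eq s r 1]

/-- Key bumping lemma: inserting a weakly increasing word `y` that is
row-wise strictly smaller than the first row `z` pushes `z` out. -/
lemma rsInsertWord_bump : ∀ (y p z : List ℕ) (Zr : List (List ℕ)),
    List.Pairwise (· ≤ ·) (p ++ y) → z.length ≤ y.length →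
    (∀ j < z.length, y.getD j 0 < z.getD j 0) →
    rsInsertWord ((p ++ z) :: Zr) y = (p ++ y) :: rsInsertWord Zr z
  | [], p, z, Zr, _, hlen, _ => by
    have : z = [] := List.eq_nil_of_length_eq_zero (by simpa using hlen)
    subst this
    rfl
  | a :: y', p, z, Zr, hpair, hlen, hcmp => by
    have hpa : ∀ b ∈ p, ¬ a < b := by
      intro b hb
      have := (List.pairwise_append.mp hpair).2.2 b hb a (by simp)
      omega
    cases z with
    | nil =>
      show rsInsertWord (rsInsert ((p ++ []) :: Zr) a) y' = _
      rw [rsInsert, insertRow_skip a p [] hpa]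
      have h0 : insertRow ([] : List ℕ) a = ([a], none) := rfl
      rw [h0]
      simp only
      have := rsInsertWord_bump y' (p ++ [a]) [] Zr
        (by simpa using hpair) (by simp) (by simp)
      simpa using this
    | cons b z' =>
      have hab : a < b := by simpa using hcmp 0 (by simp)
      show rsInsertWord (rsInsert ((p ++ b :: z') :: Zr) a) y' = _
      rw [rsInsert, insertRow_skip a p (b :: z') hpa]
      have h1 : insertRow (b :: z') a = (a :: z', some b) := by
        simp [insertRow, hab]
      rw [h1]
      simp only
      have key := rsInsertWord_bump y' (p ++ [a]) z' (rsInsert Zr b)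
        (by simpa using hpair)
        (by simpa using hlen)
        (by intro j hj; have := hcmp (j+1) (by simpa using hj); simpa using this)
      have : p ++ a :: z' = (p ++ [a]) ++ z' := by simp
      rw [this, key]
      simp [rsInsertWord]

/-- Inserting the row word of an SSYT on top of it reproduces it. -/
lemma rsInsertWord_row : ∀ (v : List (List ℕ)) (y : List ℕ), y ≠ [] →
    List.Pairwise (· ≤ ·) y →
    IsSSYT v →
    (∀ z ∈ v.head?, z.length ≤ y.length ∧ ∀ j < z.length, y.getD j 0 < z.getD j 0) →
    rsInsertWord v y = y :: v
  | [], y, hy, hpair, _, _ => by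
    match y, hy with
    | a :: y', _ =>
      show rsInsertWord (rsInsert [] a) y' = _
      have := rsInsertWord_bump y' [a] [] []
        (by simpa using hpair) (by simp) (by simp)
      simpa [rsInsert, rsInsertWord] using this
  | z :: rest, y, hy, hpair, hssyt, hcmp => by
    obtain ⟨hrows, hne, hchain⟩ := hssyt
    obtain ⟨hlen, hc⟩ := hcmp z (by simp)
    have e1 := rsInsertWord_bump y [] z rest (by simpa using hpair) hlen hc
    simp only [List.nil_append] at e1
    rw [e1]
    congr 1
    apply rsInsertWord_row rest z (hne z (by simp))
      (List.isChain_iff_pairwise.mp (hrows z (by simp)))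
      ⟨fun t ht => hrows t (by simp [ht]), fun t ht => hne t (by simp [ht]),
        (List.isChain_cons.mp hchain).2⟩
    · intro z2 hz2
      cases rest with
      | nil => simp at hz2
      | cons w rest' =>
        simp only [List.head?_cons, Option.mem_def, Option.some.injEq] at hz2
        subst hz2
        exact (List.isChain_cons_cons.mp hchain).1

lemma rowWord_cons (h : List ℕ) (t : List (List ℕ)) :
    rowWord (h :: t) = rowWord t ++ h := by
  simp [rowWord]

lemma rsInsertWord_append (Z : List (List ℕ)) (w1 w2 : List ℕ) :
    rsInsertWord Z (w1 ++ w2) = rsInsertWord (rsInsertWord Z w1) w2 :=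
  List.foldl_append

lemma insert_rowWord : ∀ (v : List (List ℕ)), IsSSYT v →
    rsInsertWord [] (rowWord v) = v
  | [], _ => rfl
  | h :: t, hv => by
    obtain ⟨hrows, hne, hchain⟩ := hv
    rw [rowWord_cons, rsInsertWord_append,
      insert_rowWord t ⟨fun r hr => hrows r (by simp [hr]),
        fun r hr => hne r (by simp [hr]), (List.isChain_cons.mp hchain).2⟩]
    apply rsInsertWord_row t h (hne h (by simp))
      (List.isChain_iff_pairwise.mp (hrows h (by simp)))
      ⟨fun r hr => hrows r (by simp [hr]), fun r hr => hne r (by simp [hr]),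
        (List.isChain_cons.mp hchain).2⟩
    intro z hz
    cases t with
    | nil => simp at hz
    | cons w t' =>
      simp only [List.head?_cons, Option.mem_def, Option.some.injEq] at hz
      subst hz
      exact (List.isChain_cons_cons.mp hchain).1

lemma shapeAt_cons (a : List ℕ) (l : List (List ℕ)) :
    shapeAt (a :: l) 0 = a.length ∧ ∀ i, shapeAt (a :: l) (i+1) = shapeAt l i := by
  constructor <;> simp [shapeAt, List.getD]

lemma shapeAt_graftAux (s : ℕ) : ∀ (r c : ℕ) (v : List (List ℕ)) (i : ℕ),
    shapeAt (graftAux s c r v) i = (if i < r then s else 0) + shapeAt v i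
  | 0, c, v, i => by simp [graftAux]
  | r+1, c, v, i => by
    rw [graftAux]
    cases i with
    | zero => cases v <;> simp [shapeAt, List.getD]
    | succ i =>
      have h1 : shapeAt ((List.replicate s c ++ v.headD []) :: graftAux s (c+1) r v.tail) (i+1)
          = shapeAt (graftAux s (c+1) r v.tail) i := by simp [shapeAt, List.getD]
      have h2 : shapeAt v.tail i = shapeAt v (i+1) := by cases v <;> simp [shapeAt, List.getD]
      rw [h1, shapeAt_graftAux s r (c+1) v.tail i, h2]
      by_cases h : i < r <;> simp [h, Nat.succ_lt_succ_iff]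

lemma getD_replicate' (n x i : ℕ) : (List.replicate n x).getD i 0 = if i < n then x else 0 := by
  induction n generalizing i with
  | zero => simp
  | succ n ih => cases i <;> simp_all [List.getD, List.replicate_succ]

lemma shapeAt_eq_map (v : List (List ℕ)) (i : ℕ) :
    shapeAt v i = (v.map List.length).getD i 0 := by
  induction v generalizing i with
  | nil => simp [shapeAt]
  | cons h t ih => cases i <;> simp_all [shapeAt, List.getD]

/-- Inserting the row word of a rectangular tableau `v` into the highest
tableau `u = u_s^{(r)}` gives a tableau whose shape is the concatenation of
the partitions `(s^r)` and `(s'^{r'})`; consequently `H(v ⊗ u) = 0`. -/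
theorem insert_into_highest_shape_concat (r s r' s' n : ℕ) (v : List (List ℕ))
    (hv : IsSSYT v)
    (hshape : v.map List.length = List.replicate r' s')
    (hent : ∀ row ∈ v, ∀ a ∈ row, 1 ≤ a ∧ a ≤ n + 1) :
    (∀ i, shapeAt (rsInsertWord (highestTab r s) (rowWord v)) i
        = (if i < r then s else 0) + (if i < r' then s' else 0)) ∧
    energyH v (highestTab r s) = 0 := by
  have hletters : ∀ x ∈ rowWord v, 1 ≤ x := by
    intro x hx
    rw [rowWord, List.mem_flatten] at hx
    obtain ⟨row, hrow, hxrow⟩ := hx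
    exact (hent row (List.mem_reverse.mp hrow) x hxrow).1
  have hZ : rsInsertWord (highestTab r s) (rowWord v) = graftAux s 1 r v := by
    rw [highestTab_graft, rsInsertWord_graft s r (rowWord v) 1 [] hletters,
      insert_rowWord v hv]
  have hvshape : ∀ i, shapeAt v i = if i < r' then s' else 0 := by
    intro i
    rw [shapeAt_eq_map, hshape, getD_replicate']
  have hmain : ∀ i, shapeAt (rsInsertWord (highestTab r s) (rowWord v)) i
      = (if i < r then s else 0) + (if i < r' then s' else 0) := by
    intro i
    rw [hZ, shapeAt_graftAux, hvshape]
  refine ⟨hmain, ?_⟩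
  rw [energyH]
  apply Finset.sum_eq_zero
  intro i _
  have hu : shapeAt (highestTab r s) i = if i < r then s else 0 := by
    rw [highestTab_graft, shapeAt_graftAux]
    simp [shapeAt]
  rw [hmain i, hvshape, hu]
  omega
end

section
/- For one-row tableaux b ∈ B^{1,s} and b' ∈ B^{1,s'} over the two-letter alphabet {1,2}, with b containing m letters 2 and b' containing m' letters 2, the energy H(b ⊗ b') equals the number of boxes of (b' ← row(b)) in the second row of the resulting tableau, and this number is min over an explicit combinatorial matching; in particular 0 ≤ H(b ⊗ b') ≤ min(s, s', m + (s' − m')) where appropriate, and H(b ⊗ b') = 0 whenever b' is the all-1 row. -/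
/-- The one-row tableau of length `s` over `{1,2}` with `m` letters `2`. -/
def oneRow (s m : ℕ) : List ℕ := List.replicate (s - m) 1 ++ List.replicate m 2

-- helpers
lemma insertRow_two (r : List ℕ) (h : ∀ y ∈ r, y ≤ 2) :
    insertRow r 2 = (r ++ [2], none) := by
  induction r with
  | nil => rfl
  | cons y ys ih =>
    have hy : ¬ (2 < y) := Nat.not_lt.2 (h y (.head _))
    simp [insertRow, if_neg hy, ih (fun z hz => h z (.tail _ hz))]

lemma insertRow_one_no2 (a : ℕ) :
    insertRow (List.replicate a 1) 1 = (List.replicate (a+1) 1, none) := by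
  induction a with
  | zero => rfl
  | succ n ih => simp [List.replicate_succ, insertRow, ih]

lemma insertRow_one_two (a b : ℕ) :
    insertRow (List.replicate a 1 ++ List.replicate (b+1) 2) 1
      = (List.replicate (a+1) 1 ++ List.replicate b 2, some 2) := by
  induction a with
  | zero => simp [List.replicate_succ, insertRow]
  | succ n ih =>
    show insertRow (1 :: (List.replicate n 1 ++ List.replicate (b+1) 2)) 1 = _
    simp only [insertRow, lt_irrefl, if_false, ih]
    simp [List.replicate_succ]

def st (a b j : ℕ) : List (List ℕ) :=
  (List.replicate a 1 ++ List.replicate b 2) ::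
    (if j = 0 then [] else [List.replicate j 2])

lemma st_congr {a b j a' b' j' : ℕ} (h1 : a = a') (h2 : b = b') (h3 : j = j') :
    st a b j = st a' b' j' := by subst h1; subst h2; subst h3; rfl

lemma rsInsert_st_two (a b j : ℕ) : rsInsert (st a b j) 2 = st a (b+1) j := by
  have h : ∀ y ∈ List.replicate a 1 ++ List.replicate b 2, y ≤ 2 := by
    intro y hy
    rcases List.mem_append.1 hy with h | h <;>
      · have := List.eq_of_mem_replicate h; omega
  simp [st, rsInsert, insertRow_two _ h, List.replicate_succ' (n := b),
    List.append_assoc]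

lemma rsInsert_st_one_zero (a j : ℕ) : rsInsert (st a 0 j) 1 = st (a+1) 0 j := by
  simp [st, rsInsert, insertRow_one_no2]

lemma rsInsert_st_one_succ (a b j : ℕ) :
    rsInsert (st a (b+1) j) 1 = st (a+1) b (j+1) := by
  rcases Nat.eq_zero_or_pos j with hj | hj
  · subst hj
    simp [st, rsInsert, insertRow_one_two]
  · obtain ⟨j', rfl⟩ : ∃ j', j = j'+1 := ⟨j-1, by omega⟩
    have h2 : insertRow (List.replicate (j'+1) 2) 2
        = (List.replicate (j'+1) 2 ++ [2], none) := by
      apply insertRow_two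
      intro y hy; have := List.eq_of_mem_replicate hy; omega
    simp [st, rsInsert, insertRow_one_two, h2, List.replicate_succ' (n := j'+1)]

lemma fold_two (n a b j : ℕ) :
    rsInsertWord (st a b j) (List.replicate n 2) = st a (b+n) j := by
  induction n generalizing b with
  | zero => rfl
  | succ n ih =>
    rw [List.replicate_succ]
    show rsInsertWord (rsInsert (st a b j) 2) _ = _
    rw [rsInsert_st_two, ih]
    exact st_congr rfl (by omega) rfl

lemma fold_one (n a b j : ℕ) :
    rsInsertWord (st a b j) (List.replicate n 1) = st (a+n) (b-n) (j + min n b) := by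
  induction n generalizing a b j with
  | zero => simp [rsInsertWord]
  | succ n ih =>
    rw [List.replicate_succ]
    show rsInsertWord (rsInsert (st a b j) 1) _ = _
    cases b with
    | zero =>
      rw [rsInsert_st_one_zero, ih]
      exact st_congr (by omega) (by omega) (by omega)
    | succ b =>
      rw [rsInsert_st_one_succ, ih]
      exact st_congr (by omega) (by omega) (by omega)


/-- For one-row tableaux over `{1,2}`, the energy `H(b ⊗ b')` equals the
number of boxes in the second row of `(b' ← row(b))`; it satisfies
`0 ≤ H ≤ min(s, s')` and vanishes when `b'` is the all-`1` row. -/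
theorem energy_one_row_A1 (s s' m m' : ℕ) (hm : m ≤ s) (hm' : m' ≤ s') :
    energyH [oneRow s m] [oneRow s' m']
      = shapeAt (rsInsertWord [oneRow s' m'] (oneRow s m)) 1 ∧
    energyH [oneRow s m] [oneRow s' m'] ≤ min s s' ∧
    (m' = 0 → energyH [oneRow s m] [oneRow s' m'] = 0) := by
  set C := min (s - m) m' with hC
  set A := (s' - m') + (s - m) with hA
  set B := (m' - (s - m)) + m with hB
  have h0 : [oneRow s' m'] = st (s' - m') m' 0 := by simp [oneRow, st]
  have hZ : rsInsertWord [oneRow s' m'] (oneRow s m) = st A B C := by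
    rw [h0, show oneRow s m = List.replicate (s - m) 1 ++ List.replicate m 2 from rfl]
    rw [rsInsertWord, List.foldl_append]
    show rsInsertWord (rsInsertWord (st _ _ _) _) _ = _
    rw [fold_one, fold_two]
    exact st_congr rfl rfl (by omega)
  have hrow : rowWord [oneRow s m] = oneRow s m := by simp [rowWord]
  have hE : energyH [oneRow s m] [oneRow s' m']
      = ∑ i ∈ Finset.range (st A B C).length,
          (shapeAt (st A B C) i - (shapeAt [oneRow s m] i + shapeAt [oneRow s' m'] i)) := by
    rw [energyH]; rw [hrow, hZ]
  have s0 : shapeAt (st A B C) 0 = A + B := by simp [st, shapeAt]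
  have s1 : shapeAt (st A B C) 1 = C := by
    by_cases hc : C = 0 <;> simp [st, shapeAt, hc]
  have t0 : shapeAt [oneRow s m] 0 = s := by simp [shapeAt, oneRow]; omega
  have t0' : shapeAt [oneRow s' m'] 0 = s' := by simp [shapeAt, oneRow]; omega
  have t1 : shapeAt [oneRow s m] 1 = 0 := by simp [shapeAt]
  have t1' : shapeAt [oneRow s' m'] 1 = 0 := by simp [shapeAt]
  have hAB : A + B = s + s' - C := by omega
  have hval : energyH [oneRow s m] [oneRow s' m'] = C := by
    by_cases hc : C = 0
    · have hlen : (st A B C).length = 1 := by simp [st, hc]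
      rw [hE, hlen, Finset.sum_range_one, s0, t0, t0']
      omega
    · have hlen : (st A B C).length = 2 := by simp [st, hc]
      rw [hE, hlen, Finset.sum_range_succ, Finset.sum_range_one, s0, s1, t0, t0', t1, t1']
      omega
  refine ⟨?_, ?_, ?_⟩
  · rw [hval, hZ, s1]
  · rw [hval]; omega
  · intro h; rw [hval]; omega
end

section
/- Let ε_{l,j} := (E_{l,j} − E_{l,j−1}) − (E_{l−1,j} − E_{l−1,j−1}) be the local energy distribution of a path (A_1 case, all b_j single boxes in B^{1,1}). Then every ε_{l,j} is a nonnegative integer, and for each fixed j, Σ_l ε_{l,j} ≤ 1. -/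
/-- Local energy `H(u ⊗ x)` for the `A_1` combinatorial `R` on
`B^{1,l} ⊗ B^{1,1}`, with the carrier identified with its number `m` of 2's. -/
def hC (m x : ℕ) : ℕ := if x = 1 ∧ 1 ≤ m then 1 else 0

/-- New carrier for the `A_1` combinatorial `R` on `B^{1,l} ⊗ B^{1,1}`. -/
def nC (l m x : ℕ) : ℕ := if x = 1 then m - 1 else if m < l then m + 1 else m

/-- Partial energies `E_{l,j}`: total energy of the first `j` boxes with
carrier in `B^{1,l}` (initially the all-`1` carrier, `m = 0`). -/
def Efun (b : List ℕ) (l j : ℕ) : ℕ :=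
  ((b.take j).foldl (fun p x => (nC l p.1 x, p.2 + hC p.1 x)) ((0 : ℕ), (0 : ℕ))).2

/-- Local energy distribution
`ε_{l,j} = (E_{l,j} − E_{l,j−1}) − (E_{l−1,j} − E_{l−1,j−1})`,
with conventions `E_{0,j} = 0` and `E_{l,0} = 0`. -/
def epsLD (b : List ℕ) (l j : ℕ) : ℤ :=
  ((Efun b l j : ℤ) - (Efun b l (j - 1) : ℤ))
    - ((Efun b (l - 1) j : ℤ) - (Efun b (l - 1) (j - 1) : ℤ))

/-- One step of the fold. -/
def stepF (l : ℕ) (p : ℕ × ℕ) (x : ℕ) : ℕ × ℕ := (nC l p.1 x, p.2 + hC p.1 x)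

lemma nC_le (l m x : ℕ) (h : m ≤ l) : nC l m x ≤ l := by
  unfold nC; split_ifs <;> omega

lemma nC_mono (l l' m m' x : ℕ) (hl : l ≤ l') (hm : m ≤ m') (h1 : m ≤ l)
    (h2 : m' ≤ l') : nC l m x ≤ nC l' m' x := by
  unfold nC; split_ifs <;> omega

lemma hC_le_one (m x : ℕ) : hC m x ≤ 1 := by unfold hC; split_ifs <;> omega

lemma hC_mono (m m' x : ℕ) (hm : m ≤ m') : hC m x ≤ hC m' x := by
  unfold hC; split_ifs <;> omega

lemma fold_fst_le (l : ℕ) (s : List ℕ) : ∀ p : ℕ × ℕ, p.1 ≤ l →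
    (s.foldl (stepF l) p).1 ≤ l := by
  induction s with
  | nil => intro p hp; simpa using hp
  | cons x t ih =>
    intro p hp
    simpa [List.foldl_cons] using ih (stepF l p x) (nC_le l p.1 x hp)

lemma fold_fst_mono (l l' : ℕ) (hl : l ≤ l') (s : List ℕ) :
    ∀ p q : ℕ × ℕ, p.1 ≤ l → q.1 ≤ l' → p.1 ≤ q.1 →
    (s.foldl (stepF l) p).1 ≤ (s.foldl (stepF l') q).1 := by
  induction s with
  | nil => intro p q _ _ h; simpa using h
  | cons x t ih =>
    intro p q hp hq h
    simpa [List.foldl_cons] using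
      ih (stepF l p x) (stepF l' q x) (nC_le l p.1 x hp) (nC_le l' q.1 x hq)
        (nC_mono l l' p.1 q.1 x hl h hp hq)

lemma fold_zero (s : List ℕ) : ∀ e : ℕ, s.foldl (stepF 0) (0, e) = (0, e) := by
  induction s with
  | nil => intro e; rfl
  | cons x t ih =>
    intro e
    have : stepF 0 (0, e) x = (0, e) := by
      unfold stepF nC hC; split_ifs <;> simp_all
    rw [List.foldl_cons, this, ih]

/-- Carrier after processing the first `k` boxes. -/
def mfun (b : List ℕ) (l k : ℕ) : ℕ := ((b.take k).foldl (stepF l) (0, 0)).1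

lemma Efun_eq (b : List ℕ) (l j : ℕ) :
    Efun b l j = ((b.take j).foldl (stepF l) (0, 0)).2 := rfl

lemma Efun_zero (b : List ℕ) (j : ℕ) : Efun b 0 j = 0 := by
  rw [Efun_eq, fold_zero]

lemma mfun_le (b : List ℕ) (l k : ℕ) : mfun b l k ≤ l :=
  fold_fst_le l _ _ (by simp)

lemma mfun_mono (b : List ℕ) (l l' k : ℕ) (hl : l ≤ l') :
    mfun b l k ≤ mfun b l' k :=
  fold_fst_mono l l' hl _ _ _ (by simp) (by simp) le_rfl

lemma Efun_succ (b : List ℕ) (l k : ℕ) (hk : k < b.length) :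
    Efun b l (k + 1) = Efun b l k + hC (mfun b l k) (b[k]) := by
  rw [Efun_eq, Efun_eq, mfun, List.take_succ, List.getElem?_eq_getElem hk,
    Option.toList_some, List.foldl_append]
  simp [stepF]

/-- Every entry of the local energy distribution of an `A_1` path of single
boxes is nonnegative, and each column sums to at most `1`. -/
theorem local_energy_distribution_nonneg_column_sum (b : List ℕ)
    (hb : ∀ x ∈ b, x = 1 ∨ x = 2) :
    (∀ l j, 1 ≤ l → 1 ≤ j → j ≤ b.length → 0 ≤ epsLD b l j) ∧
    (∀ j N, 1 ≤ j → j ≤ b.length →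
      (∑ l ∈ Finset.Icc 1 N, epsLD b l j) ≤ 1) := by
  constructor
  · intro l j hl hj hjb
    obtain ⟨k, rfl⟩ : ∃ k, j = k + 1 := ⟨j - 1, by omega⟩
    have hk : k < b.length := by omega
    have h1 := Efun_succ b l k hk
    have h2 := Efun_succ b (l - 1) k hk
    have h3 : hC (mfun b (l - 1) k) (b[k]) ≤ hC (mfun b l k) (b[k]) :=
      hC_mono _ _ _ (mfun_mono b (l - 1) l k (by omega))
    unfold epsLD
    simp only [Nat.add_sub_cancel]
    push_cast [h1, h2]
    omega
  · intro j N hj hjb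
    obtain ⟨k, rfl⟩ : ∃ k, j = k + 1 := ⟨j - 1, by omega⟩
    have hk : k < b.length := by omega
    have key : ∀ M : ℕ, (∑ l ∈ Finset.Icc 1 M, epsLD b l (k + 1)) =
        ((Efun b M (k + 1) : ℤ) - (Efun b M k : ℤ)) := by
      intro M
      induction M with
      | zero => simp [Efun_zero]
      | succ M ih =>
        rw [Finset.sum_Icc_succ_top (by omega), ih]
        unfold epsLD
        simp only [Nat.add_sub_cancel]
        ring
    rw [key N]
    rw [Efun_succ b N k hk]
    have := hC_le_one (mfun b N k) (b[k])
    push_cast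
    omega
end
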